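/- Let M₀ ⊆ M₁ be standard subspaces with tower M_k and B_k = M_{k+1} ∩ Ker(j_k + I) as above. Then B_{k+1} ∩ B_k' = {0} for every k, where ' is the symplectic complement. Equivalently, B_{k+1} ∩ B_k' = M_{k+1} ∩ M_{k+1}' ∩ Ker(j_{k+1} + I), and since elements of the center M_{k+1} ∩ M_{k+1}' are fixed by j_{k+1} (j_{k+1}x = x), the intersection is trivial. -/

import Mathlib

/-- The symplectic complement of a real subspace of a complex Hilbert space. -/
noncomputable def symplComp {H : Type*} [NormedAddCommGroup H] [InnerProductSpace ℂ H]
    (N : Submodule ℝ H) : Submodule ℝ H where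
  carrier := {x | ∀ n ∈ N, (inner ℂ x n : ℂ).im = 0}
  zero_mem' := by intro n hn; simp
  add_mem' := by
    intro a b ha hb n hn
    rw [inner_add_left]
    simp [ha n hn, hb n hn]
  smul_mem' := by
    intro c x hx n hn
    have h1 : (c • x : H) = ((c : ℂ) • x) := by
      simp [Complex.coe_algebraMap, algebraMap_smul]
    rw [h1, inner_smul_left]
    simp [hx n hn]

/-- In the tower of standard subspaces, `B_{k+1} ∩ B_k' = {0}`.
Here `Mk = M_k`, `Mk1 = M_{k+1}`, `Mk2 = M_{k+2}`, `jk1 = j_{k+1}` the modular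
conjugation of `M_{k+1}`, `Bk1 = B_{k+1} = M_{k+2} ∩ Ker(j_{k+1} + I)`.
The key facts are supplied as hypotheses: `M_{k+1} = M_k + B_k` (so that
`(M_k ∨ B_k)' = M_{k+1}'`), `B_{k+1} ⊆ M_k'`, `j_{k+1} M_{k+1}' = M_{k+1}`,
and every element of the center `M_{k+1} ∩ M_{k+1}'` is fixed by `j_{k+1}`. -/
theorem Bk1_inter_Bk_comm_trivial {H : Type*}
    [NormedAddCommGroup H] [InnerProductSpace ℂ H] [CompleteSpace H]
    (Mk Mk1 Mk2 Bk Bk1 : Submodule ℝ H)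
    (jk1 : H →ₗ[ℝ] H)
    (hjinv : ∀ x, jk1 (jk1 x) = x)
    (hjconj : ∀ x, jk1 (Complex.I • x) = -(Complex.I • jk1 x))
    (hjanti : ∀ x y : H, (inner ℂ (jk1 x) (jk1 y) : ℂ) = inner ℂ y x)
    (hBk1def : Bk1 = Mk2 ⊓ LinearMap.ker (jk1 + LinearMap.id))
    (hBk1sub : Bk1 ≤ symplComp Mk)
    (hsum : Mk1 = Mk ⊔ Bk)
    (hjM : (symplComp Mk1).map jk1 = Mk1)
    (hfix : ∀ x ∈ Mk1 ⊓ symplComp Mk1, jk1 x = x) :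
    Bk1 ⊓ symplComp Bk = ⊥ := by
  rw [eq_bot_iff]
  rintro x ⟨hx1, hx2⟩
  have hxM : x ∈ symplComp Mk := hBk1sub hx1
  have hxker : jk1 x = -x := by
    rw [hBk1def] at hx1
    have h2 := LinearMap.mem_ker.mp (hx1.2 : x ∈ LinearMap.ker (jk1 + LinearMap.id))
    simp only [LinearMap.add_apply, LinearMap.id_coe, id_eq] at h2
    rw [eq_neg_iff_add_eq_zero]; exact h2
  have hxC : x ∈ symplComp Mk1 := by
    rw [hsum]
    intro n hn
    rcases Submodule.mem_sup.mp hn with ⟨a, ha, b, hb, rfl⟩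
    rw [inner_add_right]
    simp [hxM a ha, hx2 b hb]
  have hxM1 : -x ∈ Mk1 := by
    rw [← hjM]
    exact ⟨x, hxC, hxker⟩
  have hxc : x ∈ Mk1 ⊓ symplComp Mk1 := ⟨neg_mem_iff.mp hxM1, hxC⟩
  have := hfix x hxc
  rw [hxker] at this
  have hx0 : x = 0 := by
    have h2 : (2 : ℝ) • x = 0 := by
      rw [two_smul]
      nth_rewrite 1 [← this]; abel
    have := smul_eq_zero.mp h2
    simpa using this
  simp [hx0]
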